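/- Correctness of the secure array access protocol: let a be an array of length m over a commutative ring, indexed by Z_m, and let rot_r denote cyclic rotation by r positions (rot_r(a)[j] = a[(j − r) mod m]). Given shares ⟨a⟩₁ + ⟨a⟩₂ = a (pointwise), masks c¹ + c² + c³ = 0 (pointwise), and rotation offsets r¹, r³ ∈ Z_m, define a''₂ = rot_{r³}(rot_{r¹}(⟨a⟩₁) + c¹) and a''₃ = rot_{r³}(rot_{r¹}(⟨a⟩₂) + c² + c³). Then for any index I ∈ Z_m, with h = I + r¹ + r³ mod m, we have a''₂[h] + a''₃[h] = a[I]. -/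
import Mathlib

theorem stmt_4 {R : Type*} [CommRing R] {m : ℕ} [NeZero m]
    (a a1 a2 c1 c2 c3 : ZMod m → R) (r1 r3 I : ZMod m)
    (hshare : ∀ j, a1 j + a2 j = a j)
    (hmask : ∀ j, c1 j + c2 j + c3 j = 0)
    (a''2 a''3 : ZMod m → R)
    (ha2 : ∀ j, a''2 j = (fun i => a1 (i - r1)) (j - r3) + c1 (j - r3))
    (ha3 : ∀ j, a''3 j = (fun i => a2 (i - r1)) (j - r3) + c2 (j - r3) + c3 (j - r3)) :
    a''2 (I + r1 + r3) + a''3 (I + r1 + r3) = a I := by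
  simp only [ha2, ha3, add_sub_cancel_right]
  have := hmask (I + r1)
  have := hshare I
  linear_combination this + ‹c1 (I+r1) + c2 (I+r1) + c3 (I+r1) = 0›
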